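/- Let δ : S[0,1] → S[0,1] be a derivation on the algebra of measurable functions on [0,1] that is continuous with respect to the topology of convergence in measure. Then δ = 0. -/

import Mathlib

open MeasureTheory Set Filter

/-- Lebesgue measure on `[0,1]`. -/
noncomputable def μ01 : Measure ℝ := volume.restrict (Icc (0:ℝ) 1)

/-- A derivation on `S[0,1]` (encoded on representatives: `δ` respects a.e. equality and
satisfies linearity and the Leibniz rule a.e.) which is continuous with respect to the
topology of convergence in measure is identically zero. -/
theorem stmt_15 (δ : (ℝ → ℝ) → (ℝ → ℝ))
    (hwd : ∀ f g : ℝ → ℝ, f =ᵐ[μ01] g → δ f =ᵐ[μ01] δ g)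
    (hadd : ∀ f g : ℝ → ℝ, δ (f + g) =ᵐ[μ01] δ f + δ g)
    (hsmul : ∀ (c : ℝ) (f : ℝ → ℝ), δ (c • f) =ᵐ[μ01] c • δ f)
    (hleib : ∀ f g : ℝ → ℝ, δ (f * g) =ᵐ[μ01] δ f * g + f * δ g)
    (hcont : ∀ (F : ℕ → ℝ → ℝ) (f : ℝ → ℝ),
      TendstoInMeasure μ01 F atTop f →
      TendstoInMeasure μ01 (fun n => δ (F n)) atTop (δ f)) :
    ∀ f : ℝ → ℝ, δ f =ᵐ[μ01] 0 := by
  -- δ 0 = 0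
  have hδ0 : δ 0 =ᵐ[μ01] 0 := by
    have h := hsmul 0 0
    rwa [zero_smul, zero_smul] at h
  -- δ vanishes on idempotents (pointwise {0,1}-valued functions)
  have hidem : ∀ e : ℝ → ℝ, (∀ x, e x = 0 ∨ e x = 1) → δ e =ᵐ[μ01] 0 := by
    intro e he
    have hee : e * e = e := funext fun x => by rcases he x with h | h <;> simp [h]
    have h := hleib e e
    rw [hee] at h
    filter_upwards [h] with x hx
    simp only [Pi.add_apply, Pi.mul_apply, Pi.zero_apply] at hx ⊢
    rcases he x with h0 | h1
    · rw [h0] at hx; linarith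
    · rw [h1] at hx; linarith
  -- δ vanishes on functions with values in [0,1)
  have hIco : ∀ g : ℝ → ℝ, (∀ x, g x ∈ Ico (0:ℝ) 1) → δ g =ᵐ[μ01] 0 := by
    intro g hg
    set S : ℕ → ℝ → ℝ := fun n x => (⌊(2:ℝ)^n * g x⌋ : ℝ) / 2^n with hSdef
    have hSn0 : ∀ n, δ (S n) =ᵐ[μ01] 0 := by
      intro n
      induction n with
      | zero =>
        have h0 : S 0 = 0 := by
          funext x
          have : ⌊(2:ℝ)^0 * g x⌋ = 0 := by
            rw [pow_zero, one_mul, Int.floor_eq_zero_iff]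
            exact ⟨(hg x).1, (hg x).2⟩
          show (⌊(2:ℝ)^0 * g x⌋ : ℝ) / 2^0 = 0
          rw [this]
          norm_num
        rw [h0]; exact hδ0
      | succ n ih =>
        set E : ℝ → ℝ := fun x => 2^(n+1) * (S (n+1) x - S n x) with hEdef
        have hE : ∀ x, E x = 0 ∨ E x = 1 := by
          intro x
          set y : ℝ := (2:ℝ)^n * g x with hy
          have hy2 : (2:ℝ)^(n+1) * g x = 2 * y := by rw [hy]; ring
          have h1 : 2 * ⌊y⌋ ≤ ⌊2*y⌋ := by
            apply Int.le_floor.2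
            push_cast
            linarith [Int.floor_le y]
          have h2 : ⌊2*y⌋ < 2 * ⌊y⌋ + 2 := by
            apply Int.floor_lt.2
            push_cast
            linarith [Int.lt_floor_add_one y]
          have hval : E x = (⌊2*y⌋ : ℝ) - 2 * (⌊y⌋ : ℝ) := by
            rw [hEdef]
            simp only [hSdef, hy2]
            have h2n : ((2:ℝ)^n) ≠ 0 := by positivity
            have h2n1 : ((2:ℝ)^(n+1)) ≠ 0 := by positivity
            field_simp
            ring
          have : ⌊2*y⌋ = 2 * ⌊y⌋ ∨ ⌊2*y⌋ = 2 * ⌊y⌋ + 1 := by omega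
          rcases this with h | h
          · left; rw [hval, h]; push_cast; ring
          · right; rw [hval, h]; push_cast; ring
        have hSeq : S (n+1) = S n + ((2:ℝ)^(n+1))⁻¹ • E := by
          funext x
          simp only [Pi.add_apply, Pi.smul_apply, smul_eq_mul, hEdef]
          have h2n1 : ((2:ℝ)^(n+1)) ≠ 0 := by positivity
          field_simp
          ring
        have hδE : δ E =ᵐ[μ01] 0 := hidem E hE
        calc δ (S (n+1)) = δ (S n + ((2:ℝ)^(n+1))⁻¹ • E) := by rw [← hSeq]
          _ =ᵐ[μ01] δ (S n) + δ (((2:ℝ)^(n+1))⁻¹ • E) := hadd _ _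
          _ =ᵐ[μ01] 0 := by
              filter_upwards [ih, hsmul ((2:ℝ)^(n+1))⁻¹ E, hδE] with x hx1 hx2 hx3
              simp only [Pi.add_apply, Pi.zero_apply, Pi.smul_apply, smul_eq_mul] at *
              rw [hx1, hx2, hx3]
              ring
    -- S n → g in measure (uniformly, in fact)
    have hconv : TendstoInMeasure μ01 S atTop g := by
      rw [tendstoInMeasure_iff_dist]
      intro ε hε
      obtain ⟨N, hN⟩ := exists_pow_lt_of_lt_one hε (by norm_num : (1:ℝ)/2 < 1)
      have h0 : Tendsto (fun _ : ℕ => (0:ENNReal)) atTop (nhds 0) := tendsto_const_nhds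
      refine h0.congr' ?_
      filter_upwards [Filter.eventually_ge_atTop N] with n hn
      have hempty : {x | ε ≤ dist (S n x) (g x)} = ∅ := by
        ext x
        simp only [Set.mem_setOf_eq, Set.mem_empty_iff_false, iff_false, not_le]
        have h2n : (0:ℝ) < (2:ℝ)^n := by positivity
        have hfl : (⌊(2:ℝ)^n * g x⌋ : ℝ) ≤ (2:ℝ)^n * g x := Int.floor_le _
        have hfl2 : (2:ℝ)^n * g x < (⌊(2:ℝ)^n * g x⌋ : ℝ) + 1 := Int.lt_floor_add_one _
        have hd : dist (S n x) (g x) < ((2:ℝ)^n)⁻¹ := by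
          have hs : S n x = (⌊(2:ℝ)^n * g x⌋ : ℝ) / 2^n := rfl
          have key1 : (⌊(2:ℝ)^n * g x⌋ : ℝ) / 2^n - g x
              = ((⌊(2:ℝ)^n * g x⌋ : ℝ) - 2^n * g x) / 2^n := by
            field_simp
          rw [Real.dist_eq, hs, key1, abs_div, abs_of_pos h2n,
            div_lt_iff₀ h2n, inv_mul_cancel₀ (ne_of_gt h2n), abs_lt]
          constructor <;> linarith
        have hle : ((2:ℝ)^n)⁻¹ ≤ (1/2:ℝ)^N := by
          rw [← one_div, div_pow, one_pow, one_div, one_div]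
          apply inv_anti₀ (by positivity)
          exact pow_le_pow_right₀ (by norm_num) hn
        linarith
      show (0:ENNReal) = μ01 {x | ε ≤ dist (S n x) (g x)}
      rw [hempty]
      simp
    -- conclude δ g = 0
    obtain ⟨ns, -, hae⟩ := (hcont S g hconv).exists_seq_tendsto_ae
    have hall : ∀ᵐ x ∂μ01, ∀ n, δ (S n) x = 0 := ae_all_iff.2 fun n => hSn0 n
    filter_upwards [hae, hall] with x hx hx0
    have h0 : Tendsto (fun i => δ (S (ns i)) x) atTop (nhds 0) := by
      have : Tendsto (fun _ : ℕ => (0:ℝ)) atTop (nhds 0) := tendsto_const_nhds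
      exact this.congr fun i => (hx0 (ns i)).symm
    simpa using tendsto_nhds_unique hx h0
  -- δ vanishes on functions bounded by 1
  have hbdd : ∀ g : ℝ → ℝ, (∀ x, |g x| ≤ 1) → δ g =ᵐ[μ01] 0 := by
    intro g hg
    set g' : ℝ → ℝ := fun x => (g x + 2) / 4 with hg'def
    have hg' : ∀ x, g' x ∈ Ico (0:ℝ) 1 := by
      intro x
      have := abs_le.1 (hg x)
      constructor
      · rw [hg'def]; simp only; linarith [this.1]
      · rw [hg'def]; simp only; linarith [this.2]
    have hδg' : δ g' =ᵐ[μ01] 0 := hIco g' hg'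
    have hδ1 : δ (fun _ => (1:ℝ)) =ᵐ[μ01] 0 := hidem _ fun _ => Or.inr rfl
    have hrepr : g = (4:ℝ) • g' + (-2:ℝ) • (fun _ => (1:ℝ)) := by
      funext x
      simp only [Pi.add_apply, Pi.smul_apply, smul_eq_mul, hg'def]
      ring
    calc δ g = δ ((4:ℝ) • g' + (-2:ℝ) • (fun _ => (1:ℝ))) := by rw [← hrepr]
      _ =ᵐ[μ01] δ ((4:ℝ) • g') + δ ((-2:ℝ) • (fun _ => (1:ℝ))) := hadd _ _
      _ =ᵐ[μ01] 0 := by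
          filter_upwards [hsmul 4 g', hsmul (-2) (fun _ => (1:ℝ)), hδg', hδ1] with x h1 h2 h3 h4
          simp only [Pi.add_apply, Pi.smul_apply, smul_eq_mul, Pi.zero_apply] at *
          rw [h1, h2, h3, h4]
          ring
  -- main argument
  intro f
  have key : ∀ t : ℝ, 1 ≤ t → ∀ᵐ x ∂μ01, δ f x * (1 - t * f x ^ 2) = 0 := by
    intro t ht
    set h : ℝ → ℝ := fun x => 1 + t * f x ^ 2 with hhdef
    set g : ℝ → ℝ := fun x => f x / (1 + t * f x ^ 2) with hgdef
    have hpos : ∀ x, 0 < 1 + t * f x ^ 2 := by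
      intro x; nlinarith [sq_nonneg (f x)]
    have hgb : ∀ x, |g x| ≤ 1 := by
      intro x
      rw [hgdef]
      simp only
      rw [abs_div, abs_of_pos (hpos x), div_le_one (hpos x)]
      nlinarith [sq_nonneg (|f x| - 1), sq_abs (f x), abs_nonneg (f x)]
    have hδg : δ g =ᵐ[μ01] 0 := hbdd g hgb
    have hfg : f = g * h := by
      funext x
      simp only [Pi.mul_apply, hgdef, hhdef]
      field_simp
    have hδ1 : δ (fun _ => (1:ℝ)) =ᵐ[μ01] 0 := hidem _ fun _ => Or.inr rfl
    have hhrepr : h = (fun _ => (1:ℝ)) + t • (f * f) := by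
      funext x
      simp only [Pi.add_apply, Pi.smul_apply, Pi.mul_apply, smul_eq_mul, hhdef]
      ring
    have hδh : δ h =ᵐ[μ01] fun x => 2 * t * f x * δ f x := by
      calc δ h = δ ((fun _ => (1:ℝ)) + t • (f * f)) := by rw [← hhrepr]
        _ =ᵐ[μ01] δ (fun _ => (1:ℝ)) + δ (t • (f * f)) := hadd _ _
        _ =ᵐ[μ01] fun x => 2 * t * f x * δ f x := by
            filter_upwards [hδ1, hsmul t (f * f), hleib f f] with x h1 h2 h3
            simp only [Pi.add_apply, Pi.smul_apply, Pi.mul_apply, Pi.zero_apply,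
              smul_eq_mul] at *
            rw [h1, h2, h3]
            ring
    have hmain := hleib g h
    rw [← hfg] at hmain
    filter_upwards [hmain, hδg, hδh] with x hx hg0 hh
    simp only [Pi.add_apply, Pi.mul_apply, Pi.zero_apply] at hx hg0 hh
    rw [hg0, hh] at hx
    rw [hgdef, hhdef] at hx
    simp only at hx
    have hne : (1 + t * f x ^ 2) ≠ 0 := ne_of_gt (hpos x)
    field_simp at hx
    linear_combination hx
  have k1 := key 1 le_rfl
  have k2 := key 2 (by norm_num)
  filter_upwards [k1, k2] with x h1 h2
  have : δ f x = 0 := by linear_combination 2 * h1 - h2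
  simpa using this
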